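/- arXiv:1705.04632 — 5 statements merged into one kernel-verified Lean document; each statement's English description precedes it below -/
import Mathlib

section
/- If a and b are two points of a finite coloured linear order A with a < b realizing the same 1-character (same colour, same set of colours to the left, same set of colours to the right), then A ≡_2 A \ {b}. -/
/-- A coloured linear order: a linear order together with a colouring map into `C`. -/
structure CLO (C : Type) where
  carrier : Type
  [ord : LinearOrder carrier]
  colour : carrier → C

attribute [instance] CLO.ord

namespace CLO

variable {C : Type}

/-- Induced coloured suborder on a subset. -/
def sub (A : CLO C) (s : Set A.carrier) : CLO C where
  carrier := ↥s
  colour := fun x => A.colour x.val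

/-- The coloured suborder `A^{<a}`. -/
def left (A : CLO C) (a : A.carrier) : CLO C := A.sub {x | x < a}

/-- The coloured suborder `A^{>a}`. -/
def right (A : CLO C) (a : A.carrier) : CLO C := A.sub {x | a < x}

/-- `n`-move Ehrenfeucht–Fraïssé equivalence of coloured linear orders, via the standard
back-and-forth characterization for linear orders. -/
def EFEquiv : ℕ → CLO C → CLO C → Prop
  | 0, _, _ => True
  | n + 1, A, B =>
      (∀ a : A.carrier, ∃ b : B.carrier, A.colour a = B.colour b ∧
        EFEquiv n (A.left a) (B.left b) ∧ EFEquiv n (A.right a) (B.right b)) ∧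
      (∀ b : B.carrier, ∃ a : A.carrier, A.colour a = B.colour b ∧
        EFEquiv n (A.left a) (B.left b) ∧ EFEquiv n (A.right a) (B.right b))

/-- `a` and `b` realize the same `n`-character (including the colour) in `A`. -/
def SameChar (n : ℕ) (A : CLO C) (a b : A.carrier) : Prop :=
  A.colour a = A.colour b ∧ EFEquiv n (A.left a) (A.left b) ∧
    EFEquiv n (A.right a) (A.right b)

/-- The finite coloured linear order (string) given by a list. -/
def ofList (l : List C) : CLO C where
  carrier := Fin l.length
  colour := l.get

/-- `A` is `≡ₙ`-optimal: no strictly shorter coloured linear order is `n`-equivalent to it. -/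
def Optimal (n : ℕ) (A : CLO C) : Prop :=
  ∀ B : CLO C, Finite B.carrier → EFEquiv n A B → Nat.card A.carrier ≤ Nat.card B.carrier

end CLO

namespace CLO

variable {C : Type}

lemma efe1_iff {X Y : CLO C} :
    EFEquiv 1 X Y ↔
      ((∀ x, ∃ y, X.colour x = Y.colour y) ∧ (∀ y, ∃ x, X.colour x = Y.colour y)) := by
  constructor
  · rintro ⟨h1, h2⟩
    exact ⟨fun x => (h1 x).imp fun y hy => hy.1, fun y => (h2 y).imp fun x hx => hx.1⟩
  · rintro ⟨h1, h2⟩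
    exact ⟨fun x => (h1 x).imp fun y hy => ⟨hy, trivial, trivial⟩,
           fun y => (h2 y).imp fun x hx => ⟨hx, trivial, trivial⟩⟩

lemma auxL (A : CLO C) (a b : A.carrier) (hab : a < b) (hc : A.colour a = A.colour b)
    (x : A.carrier) (hx : x ≠ b) :
    EFEquiv 1 (A.left x) ((A.sub {z | z ≠ b}).left ⟨x, hx⟩) := by
  rw [efe1_iff]
  constructor
  · intro p
    by_cases hp : p.1 = b
    · have hbx : b < x := hp ▸ (p.2 : p.1 < x)
      refine ⟨⟨⟨a, ne_of_lt hab⟩, ?_⟩, ?_⟩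
      · exact lt_trans hab hbx
      · show A.colour p.1 = A.colour a
        rw [hp]; exact hc.symm
    · refine ⟨⟨⟨p.1, hp⟩, ?_⟩, rfl⟩
      exact (p.2 : p.1 < x)
  · intro q
    refine ⟨⟨q.1.1, ?_⟩, rfl⟩
    exact (q.2 : q.1.1 < x)

lemma auxR (A : CLO C) (a b : A.carrier) (hab : a < b) (hc : A.colour a = A.colour b)
    (hbz : ∃ z, b < z ∧ A.colour b = A.colour z)
    (x : A.carrier) (hx : x ≠ b) :
    EFEquiv 1 (A.right x) ((A.sub {z | z ≠ b}).right ⟨x, hx⟩) := by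
  rw [efe1_iff]
  constructor
  · intro p
    by_cases hp : p.1 = b
    · have hxb : x < b := hp ▸ (p.2 : x < p.1)
      obtain ⟨z, hbz', hcz⟩ := hbz
      refine ⟨⟨⟨z, ne_of_gt hbz'⟩, ?_⟩, ?_⟩
      · exact lt_trans hxb hbz'
      · show A.colour p.1 = A.colour z
        rw [hp]; exact hcz
    · refine ⟨⟨⟨p.1, hp⟩, ?_⟩, rfl⟩
      exact (p.2 : x < p.1)
  · intro q
    refine ⟨⟨q.1.1, ?_⟩, rfl⟩
    exact (q.2 : x < q.1.1)

end CLO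

/-- if `a < b` in a finite coloured linear order `A` realize the same
`1`-character, then `A ≡₂ A \ {b}`. -/
theorem stmt11 {C : Type} (A : CLO C) [Finite A.carrier] (a b : A.carrier)
    (hab : a < b) (h : CLO.SameChar 1 A a b) :
    CLO.EFEquiv 2 A (A.sub {x | x ≠ b}) := by
  obtain ⟨hc, hL, hR⟩ := h
  rw [CLO.efe1_iff] at hL hR
  have hbz : ∃ z, b < z ∧ A.colour b = A.colour z := by
    obtain ⟨z, hz⟩ := hR.1 ⟨b, hab⟩
    exact ⟨z.1, z.2, hz⟩
  have hane : a ≠ b := ne_of_lt hab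
  constructor
  · intro x
    by_cases hx : x = b
    · subst hx
      refine ⟨⟨a, hane⟩, hc.symm, ?_, ?_⟩
      · rw [CLO.efe1_iff]
        constructor
        · intro p
          obtain ⟨q, hq⟩ := hL.2 p
          refine ⟨⟨⟨q.1, ne_of_lt (lt_trans (q.2 : q.1 < a) hab)⟩, ?_⟩, hq.symm⟩
          exact (q.2 : q.1 < a)
        · intro q
          obtain ⟨z, hz⟩ := hL.1 ⟨q.1.1, (q.2 : q.1.1 < a)⟩
          exact ⟨z, hz.symm⟩
      · rw [CLO.efe1_iff]
        constructor
        · intro p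
          refine ⟨⟨⟨p.1, ne_of_gt (p.2 : x < p.1)⟩, ?_⟩, rfl⟩
          exact lt_trans hab (p.2 : x < p.1)
        · intro q
          obtain ⟨z, hz⟩ := hR.1 ⟨q.1.1, (q.2 : a < q.1.1)⟩
          exact ⟨z, hz.symm⟩
    · exact ⟨⟨x, hx⟩, rfl, CLO.auxL A a b hab hc x hx, CLO.auxR A a b hab hc hbz x hx⟩
  · intro y
    exact ⟨y.1, rfl, CLO.auxL A a b hab hc y.1 y.2, CLO.auxR A a b hab hc hbz y.1 y.2⟩
end

section
/- For m, k ≥ 2, there exists a cyclic string of length m^k over the alphabet {0,1,...,m-1} such that every string of length k over {0,...,m-1} occurs exactly once as a substring of k cyclically consecutive entries (a de Bruijn sequence exists). -/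
namespace DB

variable {m k : ℕ}

abbrev E (m k : ℕ) := Fin k → Fin m

def src (e : E m k) (j : Fin (k-1)) : Fin m := e ⟨j, by have := j.2; omega⟩
def tgt (e : E m k) (j : Fin (k-1)) : Fin m := e ⟨(j:ℕ)+1, by have := j.2; omega⟩

def P (σ : Equiv.Perm (E m k)) : Prop := ∀ e j, tgt e j = src (σ e) j

noncomputable def Orb (σ : Equiv.Perm (E m k)) (e0 : E m k) : Finset (E m k) :=
  (Finset.range (orderOf σ)).image (fun t => (σ^t) e0)

lemma pow_mem (σ : Equiv.Perm (E m k)) (e0 : E m k) (t : ℕ) : (σ^t) e0 ∈ Orb σ e0 := by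
  have hq : 0 < orderOf σ := orderOf_pos σ
  have : (σ^t) e0 = (σ^(t % orderOf σ)) e0 := by rw [pow_mod_orderOf]
  rw [this]
  exact Finset.mem_image.2 ⟨t % orderOf σ, Finset.mem_range.2 (Nat.mod_lt _ hq), rfl⟩

lemma mem_orb_iff {σ : Equiv.Perm (E m k)} {e0 e : E m k} :
    e ∈ Orb σ e0 ↔ ∃ t, (σ^t) e0 = e := by
  constructor
  · intro h
    obtain ⟨t, _, ht⟩ := Finset.mem_image.1 h
    exact ⟨t, ht⟩
  · rintro ⟨t, rfl⟩; exact pow_mem σ e0 t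

lemma apply_mem {σ : Equiv.Perm (E m k)} {e0 e : E m k} (h : e ∈ Orb σ e0) :
    σ e ∈ Orb σ e0 := by
  obtain ⟨t, rfl⟩ := mem_orb_iff.1 h
  have : σ ((σ^t) e0) = (σ^(1+t)) e0 := by
    rw [pow_add, pow_one]; rfl
  rw [this]; exact pow_mem σ e0 _

lemma inv_apply_mem {σ : Equiv.Perm (E m k)} {e0 e : E m k} (h : e ∈ Orb σ e0) :
    σ⁻¹ e ∈ Orb σ e0 := by
  obtain ⟨t, rfl⟩ := mem_orb_iff.1 h
  have hq : 0 < orderOf σ := orderOf_pos σ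
  have hinv : σ⁻¹ = σ^(orderOf σ - 1) := by
    apply inv_eq_of_mul_eq_one_right
    rw [← pow_succ']
    have : orderOf σ - 1 + 1 = orderOf σ := by omega
    rw [this, pow_orderOf_eq_one]
  rw [hinv]
  have : (σ^(orderOf σ - 1)) ((σ^t) e0) = (σ^(orderOf σ - 1 + t)) e0 := by
    rw [pow_add]; rfl
  rw [this]; exact pow_mem σ e0 _

lemma pow_cancel_mem {σ : Equiv.Perm (E m k)} {e0 : E m k} :
    ∀ (t : ℕ) (e : E m k), (σ^t) e ∈ Orb σ e0 → e ∈ Orb σ e0 := by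
  intro t
  induction t with
  | zero => intro e h; simpa using h
  | succ t ih =>
    intro e h
    have h1 : (σ^t) (σ e) ∈ Orb σ e0 := by
      have : (σ^(t+1)) e = (σ^t) (σ e) := by rw [pow_succ]; rfl
      rwa [this] at h
    have h2 := ih _ h1
    have := inv_apply_mem h2
    simpa using this

lemma mem_symm {σ : Equiv.Perm (E m k)} {e0 e : E m k} (h : e ∈ Orb σ e0) :
    e0 ∈ Orb σ e := by
  obtain ⟨t, _, rfl⟩ := Finset.mem_image.1 h
  have : (σ^(orderOf σ - t)) ((σ^t) e0) = e0 := by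
    have : (σ^(orderOf σ - t)) ((σ^t) e0) = (σ^(orderOf σ - t + t)) e0 := by
      rw [pow_add]; rfl
    rw [this]
    have ht : t ≤ orderOf σ := le_of_lt (Finset.mem_range.1 (by assumption))
    have : orderOf σ - t + t = orderOf σ := by omega
    rw [this, pow_orderOf_eq_one]; rfl
  exact mem_orb_iff.2 ⟨orderOf σ - t, this⟩

lemma orb_subset {σ : Equiv.Perm (E m k)} {e0 e : E m k} (h : e ∈ Orb σ e0) :
    Orb σ e ⊆ Orb σ e0 := by
  intro x hx
  obtain ⟨s, rfl⟩ := mem_orb_iff.1 hx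
  obtain ⟨t, rfl⟩ := mem_orb_iff.1 h
  have : (σ^s) ((σ^t) e0) = (σ^(s+t)) e0 := by rw [pow_add]; rfl
  rw [this]; exact pow_mem σ e0 _

lemma orb_eq {σ : Equiv.Perm (E m k)} {e0 e : E m k} (h : e ∈ Orb σ e0) :
    Orb σ e = Orb σ e0 :=
  le_antisymm (orb_subset h) (orb_subset (mem_symm h))

lemma pow_apply {σ : Equiv.Perm (E m k)} (hσ : P σ) :
    ∀ (t : ℕ) (e : E m k) (i : ℕ) (hi : i < k) (h : i + t < k),
      (σ^t) e ⟨i, hi⟩ = e ⟨i + t, h⟩ := by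
  intro t
  induction t with
  | zero => intro e i hi h; rfl
  | succ t ih =>
    intro e i hi h
    have h1 : (σ^(t+1)) e = (σ^t) (σ e) := by rw [pow_succ]; rfl
    rw [h1, ih (σ e) i hi (by omega)]
    have hj : i + t < k - 1 := by omega
    have := (hσ e ⟨i + t, hj⟩).symm
    simp only [src, tgt] at this
    exact this


def ext (v : Fin (k-1) → Fin m) (c : Fin m) : E m k :=
  fun j => if h : (j:ℕ) < k-1 then v ⟨j, h⟩ else c

def walk (v u : Fin (k-1) → Fin m) (t : ℕ) : Fin (k-1) → Fin m :=
  fun j => if h : (j:ℕ) + t < k-1 then v ⟨(j:ℕ)+t, h⟩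
    else u ⟨((j:ℕ)+t-(k-1)) % (k-1), Nat.mod_lt _ (Nat.lt_of_le_of_lt (Nat.zero_le _) j.2)⟩

lemma walk_zero (v u : Fin (k-1) → Fin m) : walk v u 0 = v := by
  funext j
  have hj := j.2
  simp only [walk]
  rw [dif_pos (by omega)]
  congr 1

lemma walk_last (v u : Fin (k-1) → Fin m) : walk v u (k-1) = u := by
  funext j
  have hj := j.2
  simp only [walk]
  rw [dif_neg (by omega)]
  congr 1
  simp only [Fin.ext_iff, Fin.val_mk]
  have h1 : (j:ℕ) + (k-1) - (k-1) = (j:ℕ) := by omega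
  rw [h1, Nat.mod_eq_of_lt hj]

lemma tgt_ext_walk (v u : Fin (k-1) → Fin m) (t : ℕ) (ht : t < k-1) :
    tgt (ext (walk v u t) (u ⟨t, ht⟩)) = walk v u (t+1) := by
  funext j
  have hj := j.2
  simp only [tgt, ext, walk]
  by_cases h1 : (j:ℕ)+1 < k-1
  · rw [dif_pos h1]
    by_cases h2 : (j:ℕ)+1+t < k-1
    · rw [dif_pos h2, dif_pos (show (j:ℕ)+(t+1) < k-1 by omega)]
      congr 1
      simp only [Fin.ext_iff, Fin.val_mk]
      omega
    · rw [dif_neg h2, dif_neg (show ¬((j:ℕ)+(t+1) < k-1) by omega)]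
      congr 1
      simp only [Fin.ext_iff, Fin.val_mk]
      congr 1
      omega
  · rw [dif_neg h1, dif_neg (show ¬((j:ℕ)+(t+1) < k-1) by omega)]
    congr 1
    simp only [Fin.ext_iff, Fin.val_mk]
    have h3 : (j:ℕ)+(t+1)-(k-1) = t := by omega
    rw [h3, Nat.mod_eq_of_lt ht]

lemma S_univ {S : Finset (Fin (k-1) → Fin m)} (hne : S.Nonempty)
    (hclosed : ∀ v ∈ S, ∀ c : Fin m, tgt (ext v c) ∈ S) : S = Finset.univ := by
  obtain ⟨v0, hv0⟩ := hne
  apply Finset.eq_univ_of_forall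
  intro u
  have key : ∀ t, t ≤ k-1 → walk v0 u t ∈ S := by
    intro t
    induction t with
    | zero => intro _; rw [walk_zero]; exact hv0
    | succ t ih =>
      intro h
      rw [← tgt_ext_walk v0 u t (by omega)]
      exact hclosed _ (ih (by omega)) _
  have := key (k-1) le_rfl
  rwa [walk_last] at this

end DB

namespace DB

variable {m k : ℕ}

lemma exists_perm (hm : 2 ≤ m) (hk : 2 ≤ k) :
    ∃ σ : Equiv.Perm (E m k), P σ ∧
      Orb σ (fun _ => ⟨0, by omega⟩) = Finset.univ := by
  classical
  set e0 : E m k := fun _ => ⟨0, by omega⟩ with he0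
  -- the rotation permutation
  have hklt : 0 < k := by omega
  set πf : Fin k → Fin k := fun j => ⟨((j:ℕ)+1) % k, Nat.mod_lt _ hklt⟩ with hπf
  have hπinj : Function.Injective πf := by
    intro a b hab
    have h : ((a:ℕ)+1) % k = ((b:ℕ)+1) % k := congrArg Fin.val hab
    have ha := a.2
    have hb := b.2
    have ea : ((a:ℕ)+1) % k = if (a:ℕ)+1 = k then 0 else (a:ℕ)+1 := by
      split_ifs with h'
      · rw [h']; exact Nat.mod_self k
      · exact Nat.mod_eq_of_lt (by omega)
    have eb : ((b:ℕ)+1) % k = if (b:ℕ)+1 = k then 0 else (b:ℕ)+1 := by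
      split_ifs with h'
      · rw [h']; exact Nat.mod_self k
      · exact Nat.mod_eq_of_lt (by omega)
    rw [ea, eb] at h
    apply Fin.ext
    split_ifs at h <;> omega
  set π : Fin k ≃ Fin k :=
    Equiv.ofBijective πf ⟨hπinj, Finite.surjective_of_injective hπinj⟩ with hπ
  set ρ : Equiv.Perm (E m k) := Equiv.arrowCongr π.symm (Equiv.refl (Fin m)) with hρ
  have hρapp : ∀ (e : E m k) (j : Fin k), ρ e j = e (πf j) := by
    intro e j
    simp [hρ, hπ, Equiv.arrowCongr]; rfl
  have hsrcρ : ∀ e : E m k, src (ρ e) = tgt e := by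
    intro e
    funext j
    have hj := j.2
    rw [src, hρapp]
    simp only [tgt]
    congr 1
    simp only [hπf, Fin.ext_iff, Fin.val_mk]
    exact Nat.mod_eq_of_lt (by omega)
  have hPρ : P ρ := fun e j => (congrFun (hsrcρ e) j).symm
  -- pick the maximizer
  obtain ⟨σ, hσs, hmax⟩ := (Finset.univ.filter P).exists_max_image
    (fun σ => (Orb σ e0).card) ⟨ρ, Finset.mem_filter.2 ⟨Finset.mem_univ _, hPρ⟩⟩
  have hPσ : P σ := (Finset.mem_filter.1 hσs).2
  refine ⟨σ, hPσ, ?_⟩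
  by_contra hO
  set O := Orb σ e0 with hOdef
  have he0O : e0 ∈ O := by simpa using pow_mem σ e0 0
  by_cases hpair : ∃ e1 e2 : E m k, e1 ∈ O ∧ e2 ∉ O ∧ tgt e1 = tgt e2
  · -- merge the cycle of e2 with the cycle of e0, contradicting maximality
    obtain ⟨e1, e2, he1, he2, htgt⟩ := hpair
    set σ' := σ * Equiv.swap e1 e2 with hσ'
    have hne12 : e1 ≠ e2 := fun h => he2 (h ▸ he1)
    have happ : ∀ e, e ≠ e1 → e ≠ e2 → σ' e = σ e := by
      intro e h1 h2
      simp [hσ', Equiv.Perm.mul_apply, Equiv.swap_apply_of_ne_of_ne h1 h2]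
    have happ1 : σ' e1 = σ e2 := by simp [hσ', Equiv.Perm.mul_apply]
    have happ2 : σ' e2 = σ e1 := by simp [hσ', Equiv.Perm.mul_apply]
    have hP' : P σ' := by
      intro e j
      rcases eq_or_ne e e1 with rfl | h1
      · rw [happ1, htgt]; exact hPσ e2 j
      rcases eq_or_ne e e2 with rfl | h2
      · rw [happ2, ← htgt]; exact hPσ e1 j
      · rw [happ e h1 h2]; exact hPσ e j
    set O' := Orb σ' e0 with hO'def
    have hstep : ∀ e, e ∈ O' → e ≠ e1 → e ≠ e2 → σ e ∈ O' := by
      intro e he h1 h2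
      rw [← happ e h1 h2]
      exact apply_mem he
    have he0O' : e0 ∈ O' := by simpa using pow_mem σ' e0 0
    have hex1 : ∃ t, (σ^t) e0 = e1 := mem_orb_iff.1 he1
    have haspec : (σ^(Nat.find hex1)) e0 = e1 := Nat.find_spec hex1
    have hkey1 : ∀ t, t ≤ Nat.find hex1 → (σ^t) e0 ∈ O' := by
      intro t
      induction t with
      | zero => intro _; simpa using he0O'
      | succ t ih =>
        intro h
        have hzO' : (σ^t) e0 ∈ O' := ih (by omega)
        have hz1 : (σ^t) e0 ≠ e1 := Nat.find_min hex1 (show t < Nat.find hex1 by omega)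
        have hz2 : (σ^t) e0 ≠ e2 := fun hc => he2 (hc ▸ pow_mem σ e0 t)
        have hs : (σ^(t+1)) e0 = σ ((σ^t) e0) := by rw [pow_succ']; rfl
        rw [hs]
        exact hstep _ hzO' hz1 hz2
    have he1O' : e1 ∈ O' := haspec ▸ hkey1 _ le_rfl
    have hσe2O' : σ e2 ∈ O' := happ1 ▸ apply_mem he1O'
    have hex2 : ∃ b, 0 < b ∧ (σ^b) e2 = e2 := by
      refine ⟨orderOf σ, orderOf_pos σ, ?_⟩
      rw [pow_orderOf_eq_one]; rfl
    obtain ⟨hbpos, hbspec⟩ := Nat.find_spec hex2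
    have hkey2 : ∀ t, 1 ≤ t → t ≤ Nat.find hex2 → (σ^t) e2 ∈ O' := by
      intro t
      induction t with
      | zero => intro h _; omega
      | succ t ih =>
        intro _ h2
        rcases Nat.eq_zero_or_pos t with rfl | ht
        · simpa [pow_one] using hσe2O'
        · have hzO' : (σ^t) e2 ∈ O' := ih ht (by omega)
          have hz2 : (σ^t) e2 ≠ e2 := fun hc =>
            Nat.find_min hex2 (show t < Nat.find hex2 by omega) ⟨ht, hc⟩
          have hz1 : (σ^t) e2 ≠ e1 := by
            intro hc
            exact he2 (pow_cancel_mem t e2 (hc ▸ he1))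
          have hs : (σ^(t+1)) e2 = σ ((σ^t) e2) := by rw [pow_succ']; rfl
          rw [hs]
          exact hstep _ hzO' hz1 hz2
    have he2O' : e2 ∈ O' := hbspec ▸ hkey2 _ hbpos le_rfl
    have hσe1O' : σ e1 ∈ O' := happ2 ▸ apply_mem he2O'
    have hOeq : Orb σ e1 = O := orb_eq he1
    have hkey3 : ∀ t, 1 ≤ t → (σ^t) e1 ∈ O' := by
      intro t
      induction t with
      | zero => intro h; omega
      | succ t ih =>
        intro _
        rcases Nat.eq_zero_or_pos t with rfl | ht
        · simpa [pow_one] using hσe1O'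
        · have hzO' : (σ^t) e1 ∈ O' := ih ht
          have hzO : (σ^t) e1 ∈ O := hOeq ▸ pow_mem σ e1 t
          have hz2 : (σ^t) e1 ≠ e2 := fun hc => he2 (hc ▸ hzO)
          have hs : (σ^(t+1)) e1 = σ ((σ^t) e1) := by rw [pow_succ']; rfl
          rcases eq_or_ne ((σ^t) e1) e1 with hc | hc
          · rw [hs, hc]; exact hσe1O'
          · rw [hs]; exact hstep _ hzO' hc hz2
    have hsub : O ⊆ O' := by
      intro z hz
      rw [← hOeq] at hz
      obtain ⟨t, rfl⟩ := mem_orb_iff.1 hz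
      rcases Nat.eq_zero_or_pos t with rfl | ht
      · simpa using he1O'
      · exact hkey3 t ht
    have hlt : O.card < O'.card :=
      Finset.card_lt_card ⟨hsub, fun h => he2 (h he2O')⟩
    have hle := hmax σ' (Finset.mem_filter.2 ⟨Finset.mem_univ _, hP'⟩)
    change (Orb σ' e0).card ≤ O.card at hle
    rw [← hO'def] at hle
    omega
  · -- no such pair : O is already everything, contradiction
    push_neg at hpair
    set S : Finset (Fin (k-1) → Fin m) := O.image tgt with hS
    have hAO : ∀ e, tgt e ∈ S → e ∈ O := by
      intro e he
      obtain ⟨e1, he1, htgt⟩ := Finset.mem_image.1 he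
      by_contra hc
      exact hpair e1 e he1 hc htgt
    set A := Finset.univ.filter (fun e : E m k => tgt e ∈ S) with hA
    set B := Finset.univ.filter (fun e : E m k => src e ∈ S) with hB
    have hAeqO : A = O := by
      apply le_antisymm
      · intro e he
        exact hAO e (Finset.mem_filter.1 he).2
      · intro e he
        exact Finset.mem_filter.2 ⟨Finset.mem_univ _, Finset.mem_image_of_mem tgt he⟩
    have hBA : B = A.image ρ := by
      ext e'
      simp only [hB, hA, Finset.mem_filter, Finset.mem_univ, true_and, Finset.mem_image]
      constructor
      · intro h
        refine ⟨ρ.symm e', ?_, by simp⟩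
        have h2 : src (ρ (ρ.symm e')) = tgt (ρ.symm e') := hsrcρ _
        rw [Equiv.apply_symm_apply] at h2
        rw [← h2]
        exact h
      · rintro ⟨e, hte, rfl⟩
        rw [hsrcρ]
        exact hte
    have hcardBA : B.card = A.card := by
      rw [hBA, Finset.card_image_of_injective _ (Equiv.injective ρ)]
    have hOB : O ⊆ B := by
      intro e he
      refine Finset.mem_filter.2 ⟨Finset.mem_univ _, ?_⟩
      have h1 : σ⁻¹ e ∈ O := inv_apply_mem he
      have h2 : tgt (σ⁻¹ e) = src e := by
        funext j
        rw [hPσ (σ⁻¹ e) j]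
        congr 1
        exact Equiv.apply_symm_apply σ e
      rw [← h2]
      exact Finset.mem_image_of_mem tgt h1
    have hBO : O = B := Finset.eq_of_subset_of_card_le hOB
      (le_of_eq (by rw [hcardBA, hAeqO]))
    have hclosed : ∀ v ∈ S, ∀ c : Fin m, tgt (ext v c) ∈ S := by
      intro v hv c
      have hsrc : src (ext v c) = v := by
        funext j
        have hj := j.2
        simp only [src, ext]
        rw [dif_pos (show ((⟨(j:ℕ), by omega⟩ : Fin k) : ℕ) < k - 1 from hj)]
      have hB' : ext v c ∈ B :=
        Finset.mem_filter.2 ⟨Finset.mem_univ _, by rw [hsrc]; exact hv⟩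
      have hO' : ext v c ∈ O := by rw [hBO]; exact hB'
      exact Finset.mem_image_of_mem tgt hO'
    have hSuniv : S = Finset.univ :=
      S_univ ⟨tgt e0, Finset.mem_image_of_mem tgt he0O⟩ hclosed
    apply hO
    apply Finset.eq_univ_of_forall
    intro e
    exact hAO e (by rw [hSuniv]; exact Finset.mem_univ _)

end DB


/-- de Bruijn sequences exist: for `m, k ≥ 2` there is a cyclic string of
length `m^k` over an `m`-letter alphabet in which every word of length `k` occurs at exactly
one (cyclic) position. -/
theorem stmt13 (m k : ℕ) (hm : 2 ≤ m) (hk : 2 ≤ k) :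
    ∃ s : ZMod (m ^ k) → Fin m, ∀ w : Fin k → Fin m,
      ∃! i : ZMod (m ^ k), ∀ j : Fin k, s (i + ((j : ℕ) : ZMod (m ^ k))) = w j := by
  classical
  obtain ⟨σ, hPσ, hOrb⟩ := DB.exists_perm hm hk
  set N := m ^ k with hN
  haveI : NeZero N := ⟨by positivity⟩
  set e0 : DB.E m k := fun _ => ⟨0, by omega⟩ with he0
  have hex : ∃ c, 0 < c ∧ (σ^c) e0 = e0 :=
    ⟨orderOf σ, orderOf_pos σ, by rw [pow_orderOf_eq_one]; rfl⟩
  set c := Nat.find hex with hc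
  obtain ⟨hcpos, hcspec⟩ := Nat.find_spec hex
  have hmod' : ∀ d r, (σ^(c*d + r)) e0 = (σ^r) e0 := by
    intro d r
    induction d with
    | zero => simp
    | succ d ih =>
      have h : c*(d+1) + r = (c*d + r) + c := by ring
      rw [h, pow_add, Equiv.Perm.mul_apply, hcspec, ih]
  have hmod : ∀ t, (σ^t) e0 = (σ^(t % c)) e0 := by
    intro t
    conv_lhs => rw [← Nat.div_add_mod t c]
    exact hmod' _ _
  have key : ∀ t1 t2, t1 < t2 → t2 < c → (σ^t1) e0 = (σ^t2) e0 → False := by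
    intro t1 t2 hlt h2 heq
    have h3 : (σ^t1) ((σ^(t2-t1)) e0) = (σ^t1) e0 := by
      rw [← Equiv.Perm.mul_apply, ← pow_add, show t1 + (t2 - t1) = t2 by omega]
      exact heq.symm
    have h4 : (σ^(t2-t1)) e0 = e0 := (Equiv.injective _) h3
    exact Nat.find_min hex (show t2 - t1 < c by omega) ⟨by omega, h4⟩
  have hinj : ∀ t1 t2, t1 < c → t2 < c → (σ^t1) e0 = (σ^t2) e0 → t1 = t2 := by
    intro t1 t2 h1 h2 heq
    rcases lt_trichotomy t1 t2 with h | h | h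
    · exact (key t1 t2 h h2 heq).elim
    · exact h
    · exact (key t2 t1 h h1 heq.symm).elim
  have himg : (Finset.range c).image (fun t => (σ^t) e0) = DB.Orb σ e0 := by
    apply le_antisymm
    · intro e he
      obtain ⟨t, _, ht⟩ := Finset.mem_image.1 he
      rw [← ht]
      exact DB.pow_mem σ e0 t
    · intro e he
      obtain ⟨t, ht⟩ := DB.mem_orb_iff.1 he
      refine Finset.mem_image.2 ⟨t % c, Finset.mem_range.2 (Nat.mod_lt _ hcpos), ?_⟩
      rw [← hmod, ht]
  have hceq : c = N := by
    have h1 : ((Finset.range c).image (fun t => (σ^t) e0)).card = c := by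
      rw [Finset.card_image_of_injOn, Finset.card_range]
      intro t1 ht1 t2 ht2 heq
      exact hinj t1 t2 (Finset.mem_range.1 ht1) (Finset.mem_range.1 ht2) heq
    have h2 : (Finset.univ : Finset (DB.E m k)).card = N := by
      rw [Finset.card_univ]
      simp [hN]
    rw [himg, hOrb, h2] at h1
    exact h1.symm
  set g : ZMod N → DB.E m k := fun i => (σ^(i.val)) e0 with hg
  have hginj : Function.Injective g := by
    intro i1 i2 h
    have h1 : i1.val = i2.val :=
      hinj i1.val i2.val (by rw [hceq]; exact ZMod.val_lt i1)
        (by rw [hceq]; exact ZMod.val_lt i2) h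
    exact ZMod.val_injective N h1
  have hgbij : Function.Bijective g := by
    rw [Fintype.bijective_iff_injective_and_card]
    refine ⟨hginj, ?_⟩
    simp [ZMod.card, hN]
  have hwin : ∀ (i : ZMod N) (j : Fin k), g (i + ((j:ℕ) : ZMod N)) = (σ^(j:ℕ)) (g i) := by
    intro i j
    have hjk : (j:ℕ) < N := lt_trans j.2 (Nat.lt_pow_self (by omega : 1 < m) : k < m ^ k)
    have h1 : (i + ((j:ℕ) : ZMod N)).val = (i.val + (j:ℕ)) % N := by
      rw [ZMod.val_add, ZMod.val_natCast, Nat.mod_eq_of_lt hjk]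
    simp only [hg]
    have h2 : (i.val + (j:ℕ)) % N = (i.val + (j:ℕ)) % c := by rw [hceq]
    rw [h1, h2, ← hmod (i.val + (j:ℕ)),
      show i.val + (j:ℕ) = (j:ℕ) + i.val by omega, pow_add, Equiv.Perm.mul_apply]
  refine ⟨fun i => g i ⟨0, by omega⟩, ?_⟩
  intro w
  obtain ⟨i, hi⟩ := hgbij.2 w
  refine ⟨i, ?_, ?_⟩
  · intro j
    show g (i + ((j:ℕ) : ZMod N)) ⟨0, by omega⟩ = w j
    rw [hwin i j, DB.pow_apply hPσ (j:ℕ) (g i) 0 (by omega) (by have := j.2; omega), hi]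
    congr 1
    exact Fin.ext (by simp)
  · intro i' hi'
    apply hginj
    rw [hi]
    funext j
    have h3 : g (i' + ((j:ℕ) : ZMod N)) ⟨0, by omega⟩ = w j := hi' j
    rw [hwin i' j, DB.pow_apply hPσ (j:ℕ) (g i') 0 (by omega) (by have := j.2; omega)] at h3
    rw [← h3]
    congr 1
    exact Fin.ext (by simp)
end

section
/- The binary strings rrbrbrbb and rrbbrrbb of length 8 are 2-equivalent, and both are ≡_2-optimal (no shorter string is 2-equivalent to them); hence optimal representatives of ≡_2-classes need not be unique. -/
namespace CLOProof
open CLO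

/-- The Prop-valued 1-character of a point in a Bool-coloured linear order. -/
def chiP (A : CLO Bool) (x : A.carrier) : Prop × Prop × Prop × Prop × Prop :=
  ((∃ y, y < x ∧ A.colour y = true), (∃ y, y < x ∧ A.colour y = false),
   A.colour x = true,
   (∃ y, x < y ∧ A.colour y = true), (∃ y, x < y ∧ A.colour y = false))

/-- The Bool-valued 1-character of a position in a list. -/
def chiB (l : List Bool) (x : Fin l.length) : Bool × Bool × Bool × Bool × Bool :=
  (decide (∃ y, y < x ∧ l.get y = true), decide (∃ y, y < x ∧ l.get y = false),
   l.get x,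
   decide (∃ y, x < y ∧ l.get y = true), decide (∃ y, x < y ∧ l.get y = false))

lemma efequiv_zero (A B : CLO Bool) : EFEquiv 0 A B := trivial

lemma efequiv_one_sub {A B : CLO Bool} {s : Set A.carrier} {t : Set B.carrier}
    (h : ∀ c, (∃ y, y ∈ s ∧ A.colour y = c) ↔ (∃ y, y ∈ t ∧ B.colour y = c)) :
    EFEquiv 1 (A.sub s) (B.sub t) := by
  constructor
  · rintro ⟨y, hy⟩
    obtain ⟨z, hz, hc⟩ := (h (A.colour y)).mp ⟨y, hy, rfl⟩
    exact ⟨⟨z, hz⟩, hc.symm, trivial, trivial⟩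
  · rintro ⟨z, hz⟩
    obtain ⟨y, hy, hc⟩ := (h (B.colour z)).mpr ⟨z, hz, rfl⟩
    exact ⟨⟨y, hy⟩, hc, trivial, trivial⟩

lemma exists_of_efequiv_one_sub {A B : CLO Bool} {s : Set A.carrier} {t : Set B.carrier}
    (h : EFEquiv 1 (A.sub s) (B.sub t)) (c : Bool) :
    (∃ y, y ∈ s ∧ A.colour y = c) ↔ (∃ y, y ∈ t ∧ B.colour y = c) := by
  constructor
  · rintro ⟨y, hy, rfl⟩
    obtain ⟨⟨z, hz⟩, hc, -, -⟩ := h.1 ⟨y, hy⟩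
    exact ⟨z, hz, hc.symm⟩
  · rintro ⟨z, hz, rfl⟩
    obtain ⟨⟨y, hy⟩, hc, -, -⟩ := h.2 ⟨z, hz⟩
    exact ⟨y, hy, hc⟩

lemma chiP_eq_of_match {A B : CLO Bool} {a : A.carrier} {b : B.carrier}
    (hc : A.colour a = B.colour b)
    (hl : EFEquiv 1 (A.left a) (B.left b)) (hr : EFEquiv 1 (A.right a) (B.right b)) :
    chiP A a = chiP B b := by
  have h1 := exists_of_efequiv_one_sub hl
  have h2 := exists_of_efequiv_one_sub hr
  simp only [chiP, Prod.mk.injEq]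
  exact ⟨propext (h1 true), propext (h1 false), propext (by rw [hc]),
    propext (h2 true), propext (h2 false)⟩

lemma match_of_chiP_eq {A B : CLO Bool} {a : A.carrier} {b : B.carrier}
    (h : chiP A a = chiP B b) :
    A.colour a = B.colour b ∧
      EFEquiv 1 (A.left a) (B.left b) ∧ EFEquiv 1 (A.right a) (B.right b) := by
  simp only [chiP, Prod.mk.injEq] at h
  obtain ⟨h1, h2, h3, h4, h5⟩ := h
  refine ⟨Bool.eq_iff_iff.mpr (iff_of_eq h3), ?_, ?_⟩
  · refine efequiv_one_sub ?_
    intro c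
    cases c
    · exact iff_of_eq h2
    · exact iff_of_eq h1
  · refine efequiv_one_sub ?_
    intro c
    cases c
    · exact iff_of_eq h5
    · exact iff_of_eq h4

lemma efequiv_two_of_chi {A B : CLO Bool}
    (h1 : ∀ a : A.carrier, ∃ b : B.carrier, chiP A a = chiP B b)
    (h2 : ∀ b : B.carrier, ∃ a : A.carrier, chiP A a = chiP B b) :
    EFEquiv 2 A B := by
  constructor
  · intro a
    obtain ⟨b, hb⟩ := h1 a
    obtain ⟨hc, hl, hr⟩ := match_of_chiP_eq hb
    exact ⟨b, hc, hl, hr⟩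
  · intro b
    obtain ⟨a, ha⟩ := h2 b
    obtain ⟨hc, hl, hr⟩ := match_of_chiP_eq ha
    exact ⟨a, hc, hl, hr⟩

lemma chi_of_efequiv_two {A B : CLO Bool} (h : EFEquiv 2 A B) :
    ∀ a : A.carrier, ∃ b : B.carrier, chiP A a = chiP B b := by
  intro a
  obtain ⟨b, hc, hl, hr⟩ := h.1 a
  exact ⟨b, chiP_eq_of_match hc hl hr⟩

lemma chiB_eq_iff (l l' : List Bool) (x : Fin l.length) (y : Fin l'.length) :
    chiB l x = chiB l' y ↔ chiP (ofList l) x = chiP (ofList l') y := by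
  simp only [chiB, chiP, Prod.mk.injEq, decide_eq_decide]
  constructor
  · rintro ⟨h1, h2, h3, h4, h5⟩
    exact ⟨propext h1, propext h2, propext (by rw [show (ofList l).colour x = (ofList l').colour y from h3]),
      propext h4, propext h5⟩
  · rintro ⟨h1, h2, h3, h4, h5⟩
    refine ⟨iff_of_eq h1, iff_of_eq h2, ?_, iff_of_eq h4, iff_of_eq h5⟩
    exact Bool.eq_iff_iff.mpr (iff_of_eq h3)

def l1 : List Bool := [true, true, false, true, false, true, false, false]
def l2 : List Bool := [true, true, false, false, true, true, false, false]

lemma fwd : ∀ i : Fin l1.length, ∃ j : Fin l2.length, chiB l1 i = chiB l2 j := by decide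
lemma bwd : ∀ j : Fin l2.length, ∃ i : Fin l1.length, chiB l1 i = chiB l2 j := by decide
lemma inj1 : ∀ i j : Fin l1.length, chiB l1 i = chiB l1 j → i = j := by decide
lemma inj2 : ∀ i j : Fin l2.length, chiB l2 i = chiB l2 j → i = j := by decide

lemma optimal_of_inj (l : List Bool)
    (hinj : ∀ i j : Fin l.length, chiB l i = chiB l j → i = j) :
    Optimal 2 (ofList l) := by
  intro B hB h
  haveI := hB
  have h1 := chi_of_efequiv_two h
  choose f hf using h1
  have hfinj : Function.Injective f := by
    intro i j hij
    refine hinj i j ((chiB_eq_iff l l i j).mpr ?_)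
    rw [hf i, hij, ← hf j]
  calc Nat.card (ofList l).carrier ≤ Nat.card B.carrier :=
    Nat.card_le_card_of_injective f hfinj

end CLOProof

/-- with `r = true`, `b = false`, the strings `rrbrbrbb` and `rrbbrrbb` are
distinct, `2`-equivalent, and both `≡₂`-optimal; hence optimal representatives of
`≡₂`-classes need not be unique. -/


theorem stmt16 :
    ([true, true, false, true, false, true, false, false] ≠
      [true, true, false, false, true, true, false, false]) ∧
    CLO.EFEquiv 2 (CLO.ofList [true, true, false, true, false, true, false, false])
      (CLO.ofList [true, true, false, false, true, true, false, false]) ∧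
    CLO.Optimal 2 (CLO.ofList [true, true, false, true, false, true, false, false]) ∧
    CLO.Optimal 2 (CLO.ofList [true, true, false, false, true, true, false, false]) := by
  refine ⟨by decide, ?_, ?_, ?_⟩
  · refine CLOProof.efequiv_two_of_chi ?_ ?_
    · intro a
      obtain ⟨j, hj⟩ := CLOProof.fwd a
      exact ⟨j, (CLOProof.chiB_eq_iff CLOProof.l1 CLOProof.l2 a j).mp hj⟩
    · intro b
      obtain ⟨i, hi⟩ := CLOProof.bwd b
      exact ⟨i, (CLOProof.chiB_eq_iff CLOProof.l1 CLOProof.l2 i b).mp hi⟩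
  · exact CLOProof.optimal_of_inj CLOProof.l1 CLOProof.inj1
  · exact CLOProof.optimal_of_inj CLOProof.l2 CLOProof.inj2
end

section
/- In the binary string A = rbrbrbrbrbrbrbr of length 15, the 7th and 9th positions realize the same 2-character, and all other positions realize pairwise distinct 2-characters, so A realizes exactly 14 distinct 2-characters. -/
namespace EFAux
open CLO
variable {C : Type}

structure CIso (A B : CLO C) where
  e : A.carrier ≃o B.carrier
  colour_eq : ∀ a, B.colour (e a) = A.colour a

def CIso.leftRes {A B : CLO C} (f : CIso A B) (a : A.carrier) :
    CIso (A.left a) (B.left (f.e a)) where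
  e := {
    toFun := fun x => ⟨f.e x.val, by simpa using f.e.lt_iff_lt.mpr x.2⟩
    invFun := fun y => ⟨f.e.symm y.val, by
      have : f.e.symm y.val < f.e.symm (f.e a) := f.e.symm.lt_iff_lt.mpr y.2
      simpa using this⟩
    left_inv := fun x => by simp; rfl
    right_inv := fun y => by simp; rfl
    map_rel_iff' := by intro x y; exact f.e.le_iff_le }
  colour_eq := fun x => f.colour_eq x.val

def CIso.rightRes {A B : CLO C} (f : CIso A B) (a : A.carrier) :
    CIso (A.right a) (B.right (f.e a)) where
  e := {
    toFun := fun x => ⟨f.e x.val, by simpa using f.e.lt_iff_lt.mpr x.2⟩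
    invFun := fun y => ⟨f.e.symm y.val, by
      have : f.e.symm (f.e a) < f.e.symm y.val := f.e.symm.lt_iff_lt.mpr y.2
      simpa using this⟩
    left_inv := fun x => by simp; rfl
    right_inv := fun y => by simp; rfl
    map_rel_iff' := by intro x y; exact f.e.le_iff_le }
  colour_eq := fun x => f.colour_eq x.val

theorem ef_congr : ∀ (n : ℕ) {A A' B B' : CLO C}
    (fA : CIso A A') (fB : CIso B B'), EFEquiv n A B → EFEquiv n A' B'
  | 0, _, _, _, _, _, _, _ => trivial
  | n + 1, A, A', B, B', fA, fB, h => by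
    obtain ⟨h1, h2⟩ := h
    constructor
    · intro a'
      obtain ⟨b, hc, hl, hr⟩ := h1 (fA.e.symm a')
      refine ⟨fB.e b, ?_, ?_, ?_⟩
      · rw [fB.colour_eq b, ← hc]
        have := fA.colour_eq (fA.e.symm a')
        simpa using this
      · have := ef_congr n (fA.leftRes (fA.e.symm a')) (fB.leftRes b) hl
        simpa using this
      · have := ef_congr n (fA.rightRes (fA.e.symm a')) (fB.rightRes b) hr
        simpa using this
    · intro b'
      obtain ⟨a, hc, hl, hr⟩ := h2 (fB.e.symm b')
      refine ⟨fA.e a, ?_, ?_, ?_⟩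
      · rw [fA.colour_eq a, hc]
        have := fB.colour_eq (fB.e.symm b')
        simpa using this.symm
      · have := ef_congr n (fA.leftRes a) (fB.leftRes (fB.e.symm b')) hl
        simpa using this
      · have := ef_congr n (fA.rightRes a) (fB.rightRes (fB.e.symm b')) hr
        simpa using this

def cisoLeft (l : List C) (a : Fin l.length) :
    CIso ((ofList l).left a) (ofList (l.take a.val)) where
  e := {
    toFun := fun x => ⟨x.val.val, by
      rw [List.length_take]
      exact lt_min x.2 x.val.isLt⟩
    invFun := fun y => ⟨⟨y.val,
        lt_trans (lt_of_lt_of_le y.isLt (List.length_take.le.trans (min_le_left _ _))) a.isLt⟩,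
      lt_of_lt_of_le y.isLt (List.length_take.le.trans (min_le_left _ _))⟩
    left_inv := fun x => rfl
    right_inv := fun y => rfl
    map_rel_iff' := Iff.rfl }
  colour_eq := fun x => by
    show (l.take a.val).get _ = l.get x.val
    exact List.getElem_take

def cisoRight (l : List C) (a : Fin l.length) :
    CIso ((ofList l).right a) (ofList (l.drop (a.val + 1))) where
  e := {
    toFun := fun x => ⟨x.val.val - (a.val + 1), by
      rw [List.length_drop]
      exact Nat.sub_lt_sub_right x.2 x.val.isLt⟩
    invFun := fun y => ⟨⟨a.val + 1 + y.val, by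
        have h1 := y.isLt
        have h2 : (List.drop (a.val + 1) l).length = l.length - (a.val + 1) :=
          List.length_drop
        omega⟩, by
      show a.val < a.val + 1 + y.val
      omega⟩
    left_inv := fun x => by
      apply Subtype.ext; apply Fin.ext
      have : a.val < x.val.val := x.2
      show a.val + 1 + (x.val.val - (a.val + 1)) = x.val.val
      omega
    right_inv := fun y => by
      apply Fin.ext
      show a.val + 1 + y.val - (a.val + 1) = y.val
      omega
    map_rel_iff' := by
      intro x y
      show x.val.val - (a.val+1) ≤ y.val.val - (a.val+1) ↔ x ≤ y
      have hx : a.val < x.val.val := x.2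
      have hy : a.val < y.val.val := y.2
      constructor
      · intro h; show x.val.val ≤ y.val.val; omega
      · intro h; have : x.val.val ≤ y.val.val := h; omega }
  colour_eq := fun x => by
    show (l.drop (a.val+1)).get _ = l.get x.val
    have hx : a.val < x.val.val := x.2
    simp [List.get_eq_getElem, List.getElem_drop]
    show (l.drop (a.val+1))[x.val.val - (a.val+1)]'(by have := x.val.isLt; simp; omega) = l[x.val.val]'x.val.isLt
    rw [List.getElem_drop]
    congr 1
    omega



def bEF : ℕ → List Bool → List Bool → Bool
  | 0, _, _ => true
  | n+1, l, m =>
    ((List.range l.length).all fun i => (List.range m.length).any fun j =>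
        (l.getD i false == m.getD j false) && bEF n (l.take i) (m.take j) &&
          bEF n (l.drop (i+1)) (m.drop (j+1))) &&
    ((List.range m.length).all fun j => (List.range l.length).any fun i =>
        (l.getD i false == m.getD j false) && bEF n (l.take i) (m.take j) &&
          bEF n (l.drop (i+1)) (m.drop (j+1)))

def bSame (l : List Bool) (a b : ℕ) : Bool :=
  (l.getD a false == l.getD b false) && bEF 2 (l.take a) (l.take b) &&
    bEF 2 (l.drop (a+1)) (l.drop (b+1))

def L15 : List Bool := [true, false, true, false, true, false, true, false, true, false,
  true, false, true, false, true]


def CIso.symm {A B : CLO C} (f : CIso A B) : CIso B A where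
  e := f.e.symm
  colour_eq := fun b => by
    have := f.colour_eq (f.e.symm b)
    simp only [OrderIso.apply_symm_apply] at this
    exact this.symm

theorem ef_left_left (n : ℕ) (l m : List Bool) (a : Fin l.length) (b : Fin m.length) :
    EFEquiv n ((ofList l).left a) ((ofList m).left b) ↔
      EFEquiv n (ofList (l.take a.val)) (ofList (m.take b.val)) :=
  ⟨ef_congr n (cisoLeft l a) (cisoLeft m b),
   ef_congr n (cisoLeft l a).symm (cisoLeft m b).symm⟩

theorem ef_right_right (n : ℕ) (l m : List Bool) (a : Fin l.length) (b : Fin m.length) :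
    EFEquiv n ((ofList l).right a) ((ofList m).right b) ↔
      EFEquiv n (ofList (l.drop (a.val + 1))) (ofList (m.drop (b.val + 1))) :=
  ⟨ef_congr n (cisoRight l a) (cisoRight m b),
   ef_congr n (cisoRight l a).symm (cisoRight m b).symm⟩

theorem key_point (n : ℕ) (l m : List Bool) (a : Fin l.length) (b : Fin m.length)
    (ih : ∀ l m : List Bool, EFEquiv n (ofList l) (ofList m) ↔ bEF n l m = true) :
    ((ofList l).colour a = (ofList m).colour b ∧
      EFEquiv n ((ofList l).left a) ((ofList m).left b) ∧
      EFEquiv n ((ofList l).right a) ((ofList m).right b)) ↔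
    ((l.getD a.val false == m.getD b.val false) && bEF n (l.take a.val) (m.take b.val) &&
      bEF n (l.drop (a.val+1)) (m.drop (b.val+1))) = true := by
  rw [Bool.and_eq_true, Bool.and_eq_true, beq_iff_eq, and_assoc,
    List.getD_eq_getElem l false a.isLt, List.getD_eq_getElem m false b.isLt,
    ef_left_left, ef_right_right, ih, ih]
  show (l.get a = m.get b ∧ _) ↔ _
  rw [List.get_eq_getElem, List.get_eq_getElem]

theorem ef_iff : ∀ (n : ℕ) (l m : List Bool),
    EFEquiv n (ofList l) (ofList m) ↔ bEF n l m = true := by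
  intro n
  induction n with
  | zero => intro l m; simp [EFEquiv, bEF]
  | succ n ih =>
    intro l m
    show ((∀ a : Fin l.length, ∃ b : Fin m.length, _) ∧
      (∀ b : Fin m.length, ∃ a : Fin l.length, _)) ↔ _
    simp only [bEF]
    rw [Bool.and_eq_true, List.all_eq_true, List.all_eq_true]
    constructor
    · rintro ⟨h1, h2⟩
      constructor
      · intro i hi
        rw [List.mem_range] at hi
        obtain ⟨b, hb⟩ := h1 ⟨i, hi⟩
        rw [List.any_eq_true]
        exact ⟨b.val, List.mem_range.mpr b.isLt, (key_point n l m ⟨i, hi⟩ b ih).mp hb⟩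
      · intro j hj
        rw [List.mem_range] at hj
        obtain ⟨a, ha⟩ := h2 ⟨j, hj⟩
        rw [List.any_eq_true]
        exact ⟨a.val, List.mem_range.mpr a.isLt, (key_point n l m a ⟨j, hj⟩ ih).mp ha⟩
    · rintro ⟨h1, h2⟩
      constructor
      · intro a
        have := h1 a.val (List.mem_range.mpr a.isLt)
        rw [List.any_eq_true] at this
        obtain ⟨j, hj, hp⟩ := this
        rw [List.mem_range] at hj
        exact ⟨⟨j, hj⟩, (key_point n l m a ⟨j, hj⟩ ih).mpr hp⟩
      · intro b
        have := h2 b.val (List.mem_range.mpr b.isLt)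
        rw [List.any_eq_true] at this
        obtain ⟨i, hi, hp⟩ := this
        rw [List.mem_range] at hi
        exact ⟨⟨i, hi⟩, (key_point n l m ⟨i, hi⟩ b ih).mpr hp⟩

theorem sameChar_iff (l : List Bool) (a b : Fin l.length) :
    SameChar 2 (ofList l) a b ↔ bSame l a.val b.val = true := by
  unfold SameChar bSame
  rw [Bool.and_eq_true, Bool.and_eq_true, beq_iff_eq, and_assoc,
    List.getD_eq_getElem l false a.isLt, List.getD_eq_getElem l false b.isLt,
    ef_left_left, ef_right_right, ef_iff, ef_iff]
  show (l.get a = l.get b ∧ _) ↔ _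
  rw [List.get_eq_getElem, List.get_eq_getElem]

def myf (a : ℕ) : ℕ := if a = 8 then 6 else if a ≤ 7 then a else a - 1

def ff (a : Fin 15) : Fin 14 := ⟨myf a.val % 14, Nat.mod_lt _ (by norm_num)⟩


end EFAux

/-- in the string `A = rbrbrbrbrbrbrbr` of length 15 (`r = true`, `b = false`),
the 7th and 9th positions (indices 6 and 8) realize the same `2`-character, these are the
only two distinct positions sharing a `2`-character, and `A` realizes exactly 14 distinct
`2`-characters. -/
theorem stmt17 :
    CLO.SameChar 2
      (CLO.ofList [true, false, true, false, true, false, true, false, true, false, true,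
        false, true, false, true]) ⟨6, by decide⟩ ⟨8, by decide⟩ ∧
    (∀ a b : Fin 15,
      CLO.SameChar 2
        (CLO.ofList [true, false, true, false, true, false, true, false, true, false, true,
          false, true, false, true]) a b →
      a = b ∨ (a = ⟨6, by decide⟩ ∧ b = ⟨8, by decide⟩) ∨
        (a = ⟨8, by decide⟩ ∧ b = ⟨6, by decide⟩)) ∧
    (∃ f : Fin 15 → Fin 14, Function.Surjective f ∧
      ∀ a b : Fin 15, f a = f b ↔
        CLO.SameChar 2
          (CLO.ofList [true, false, true, false, true, false, true, false, true, false, true,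
            false, true, false, true]) a b) := by
  have key : ∀ a b : Fin 15,
      CLO.SameChar 2 (CLO.ofList [true, false, true, false, true, false, true, false, true,
        false, true, false, true, false, true]) a b ↔
      EFAux.bSame [true, false, true, false, true, false, true, false, true, false, true,
        false, true, false, true] a.val b.val = true :=
    fun a b => EFAux.sameChar_iff [true, false, true, false, true, false, true, false, true,
      false, true, false, true, false, true] a b
  have big : ∀ a b : Fin 15,
      EFAux.bSame [true, false, true, false, true, false, true, false, true, false, true,
        false, true, false, true] a.val b.val = (EFAux.myf a.val == EFAux.myf b.val) := by
    decide
  refine ⟨?_, ?_, ?_⟩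
  · exact (key _ _).mpr ((big _ _).trans (by decide))
  · intro a b h
    have h2 : (EFAux.myf a.val == EFAux.myf b.val) = true := by
      rw [← big]; exact (key a b).mp h
    have h3 : EFAux.myf a.val = EFAux.myf b.val := by simpa using h2
    have aux : ∀ a b : Fin 15, EFAux.myf a.val = EFAux.myf b.val →
        a = b ∨ (a = ⟨6, by decide⟩ ∧ b = ⟨8, by decide⟩) ∨
          (a = ⟨8, by decide⟩ ∧ b = ⟨6, by decide⟩) := by decide
    exact aux a b h3
  · refine ⟨EFAux.ff, by decide, fun a b => ?_⟩
    rw [key a b, big a b]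
    have aux2 : ∀ a b : Fin 15,
        EFAux.ff a = EFAux.ff b ↔ (EFAux.myf a.val == EFAux.myf b.val) = true := by decide
    exact aux2 a b
end

section
/- The ≡_2-class of the binary string rbrbr is exactly {r b r^p b r : p ≥ 1}, and the string rbrb lies in a singleton ≡_2-class. -/
open CLO

lemma ef_refl : ∀ (n : ℕ) (A : CLO Bool), EFEquiv n A A := by
  intro n
  induction n with
  | zero => intro A; trivial
  | succ n ih =>
    intro A
    exact ⟨fun a => ⟨a, rfl, ih _, ih _⟩, fun a => ⟨a, rfl, ih _, ih _⟩⟩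

lemma ef1_iff (A B : CLO Bool) : EFEquiv 1 A B ↔
    ((∀ a, ∃ b, A.colour a = B.colour b) ∧ (∀ b, ∃ a, A.colour a = B.colour b)) := by
  simp [EFEquiv]

def Match (l m : List Bool) (i : Fin l.length) (j : Fin m.length) : Prop :=
  l.get i = m.get j ∧
  (∀ x : Fin l.length, x < i → ∃ y : Fin m.length, y < j ∧ l.get x = m.get y) ∧
  (∀ y : Fin m.length, y < j → ∃ x : Fin l.length, x < i ∧ l.get x = m.get y) ∧
  (∀ x : Fin l.length, i < x → ∃ y : Fin m.length, j < y ∧ l.get x = m.get y) ∧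
  (∀ y : Fin m.length, j < y → ∃ x : Fin l.length, i < x ∧ l.get x = m.get y)

lemma ef2_iff (l m : List Bool) : EFEquiv 2 (ofList l) (ofList m) ↔
    (∀ i, ∃ j, Match l m i j) ∧ (∀ j, ∃ i, Match l m i j) := by
  show ((∀ a, ∃ b, _ ∧ _ ∧ _) ∧ _) ↔ _
  simp only [ef1_iff, Match, CLO.left, CLO.right, CLO.sub, CLO.ofList, Set.mem_setOf_eq,
    Subtype.forall, Subtype.exists, exists_prop, Set.coe_setOf]
  constructor
  · rintro ⟨h1, h2⟩
    refine ⟨fun i => ?_, fun j => ?_⟩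
    · obtain ⟨j, c, ⟨p1, p2⟩, p3, p4⟩ := h1 i
      exact ⟨j, c, p1, p2, p3, p4⟩
    · obtain ⟨i, c, ⟨p1, p2⟩, p3, p4⟩ := h2 j
      exact ⟨i, c, p1, p2, p3, p4⟩
  · rintro ⟨h1, h2⟩
    refine ⟨fun i => ?_, fun j => ?_⟩
    · obtain ⟨j, c, p1, p2, p3, p4⟩ := h1 i
      exact ⟨j, c, ⟨p1, p2⟩, p3, p4⟩
    · obtain ⟨i, c, p1, p2, p3, p4⟩ := h2 j
      exact ⟨i, c, ⟨p1, p2⟩, p3, p4⟩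

lemma match_iff (l m : List Bool) (i : Fin l.length) (j : Fin m.length) :
    Match l m i j ↔
      (l.getD i.val true = m.getD j.val true ∧
       (∀ x, x < i.val → ∃ y, y < j.val ∧ l.getD x true = m.getD y true) ∧
       (∀ y, y < j.val → ∃ x, x < i.val ∧ l.getD x true = m.getD y true) ∧
       (∀ x, i.val < x → x < l.length → ∃ y, j.val < y ∧ y < m.length ∧
          l.getD x true = m.getD y true) ∧
       (∀ y, j.val < y → y < m.length → ∃ x, i.val < x ∧ x < l.length ∧
          l.getD x true = m.getD y true)) := by
  have gg : ∀ (L : List Bool) (k : ℕ) (h : k < L.length), L[k] = L.getD k true :=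
    fun L k h => (List.getD_eq_getElem L true h).symm
  have hi := i.isLt; have hj := j.isLt
  simp only [Match, List.get_eq_getElem, Fin.lt_def, Fin.forall_iff, Fin.exists_iff]
  constructor
  · rintro ⟨c, A, B, C, D⟩
    refine ⟨by rw [← gg _ _ hi, ← gg _ _ hj]; exact c, ?_, ?_, ?_, ?_⟩
    · intro x hx
      obtain ⟨y, hy1, hy2, hcol⟩ := A x (by omega) hx
      exact ⟨y, hy2, by rw [← gg _ _ (by omega : x < l.length), ← gg _ _ hy1]; exact hcol⟩
    · intro y hy
      obtain ⟨x, hx1, hx2, hcol⟩ := B y (by omega) hy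
      exact ⟨x, hx2, by rw [← gg _ _ hx1, ← gg _ _ (by omega : y < m.length)]; exact hcol⟩
    · intro x hx hxl
      obtain ⟨y, hy1, hy2, hcol⟩ := C x hxl hx
      exact ⟨y, hy2, hy1, by rw [← gg _ _ hxl, ← gg _ _ hy1]; exact hcol⟩
    · intro y hy hyl
      obtain ⟨x, hx1, hx2, hcol⟩ := D y hyl hy
      exact ⟨x, hx2, hx1, by rw [← gg _ _ hx1, ← gg _ _ hyl]; exact hcol⟩
  · rintro ⟨c, A, B, C, D⟩
    refine ⟨by rw [gg _ _ hi, gg _ _ hj]; exact c, ?_, ?_, ?_, ?_⟩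
    · intro x hxl hx
      obtain ⟨y, hy1, hcol⟩ := A x hx
      exact ⟨y, by omega, hy1, by rw [gg _ _ hxl, gg _ _ (by omega : y < m.length)]; exact hcol⟩
    · intro y hyl hy
      obtain ⟨x, hx1, hcol⟩ := B y hy
      exact ⟨x, by omega, hx1, by rw [gg _ _ (by omega : x < l.length), gg _ _ hyl]; exact hcol⟩
    · intro x hxl hx
      obtain ⟨y, hy1, hy2, hcol⟩ := C x hx hxl
      exact ⟨y, hy2, hy1, by rw [gg _ _ hxl, gg _ _ hy2]; exact hcol⟩
    · intro y hyl hy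
      obtain ⟨x, hx1, hx2, hcol⟩ := D y hy hyl
      exact ⟨x, hx2, hx1, by rw [gg _ _ hx2, gg _ _ hyl]; exact hcol⟩

lemma matchN (l m : List Bool) (a b : ℕ) (ha : a < l.length) (hb : b < m.length)
    (h1 : l.getD a true = m.getD b true)
    (h2 : ∀ x, x < a → ∃ y, y < b ∧ l.getD x true = m.getD y true)
    (h3 : ∀ y, y < b → ∃ x, x < a ∧ l.getD x true = m.getD y true)
    (h4 : ∀ x, a < x → x < l.length → ∃ y, b < y ∧ y < m.length ∧
        l.getD x true = m.getD y true)
    (h5 : ∀ y, b < y → y < m.length → ∃ x, a < x ∧ x < l.length ∧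
        l.getD x true = m.getD y true) :
    Match l m ⟨a, ha⟩ ⟨b, hb⟩ := by
  rw [match_iff]; exact ⟨h1, h2, h3, h4, h5⟩

def shape (p : ℕ) : List Bool := [true, false] ++ List.replicate p true ++ [false, true]

lemma shape_len (p : ℕ) : (shape p).length = p + 4 := by simp [shape]

lemma shape_getD (p k : ℕ) (hk : k < p + 4) :
    (shape p).getD k true = if k = 1 ∨ k = p + 2 then false else true := by
  have hs : shape p = true :: false :: (List.replicate p true ++ [false, true]) := by
    simp [shape]
  rw [hs]
  match k, hk with
  | 0, _ => simp
  | 1, _ => simp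
  | (j+2), hk =>
    simp only [List.getD_cons_succ]
    by_cases hj : j < p
    · rw [List.getD_append _ _ _ _ (by simpa using hj)]
      rw [List.getD_eq_getElem _ _ (by simpa using hj), List.getElem_replicate]
      rw [if_neg (by omega)]
    · rw [List.getD_append_right _ _ _ _ (by simpa using hj)]
      simp only [List.length_replicate]
      rcases (show j - p = 0 ∨ j - p = 1 by omega) with h | h <;> rw [h]
      · rw [if_pos (by omega)]; rfl
      · rw [if_neg (by omega)]; rfl

lemma fwd1 (m : List Bool)
    (h1 : ∀ i, ∃ j, Match [true,false,true,false,true] m i j)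
    (h2 : ∀ j, ∃ i, Match [true,false,true,false,true] m i j) :
    ∃ p : ℕ, 1 ≤ p ∧ m = shape p := by
  have hlen5 : ([true,false,true,false,true] : List Bool).length = 5 := rfl
  -- position 0
  obtain ⟨j0, M0⟩ := h1 ⟨0, by norm_num⟩
  have hj0lt := j0.isLt
  rw [match_iff] at M0
  simp only [Fin.val_mk] at M0
  obtain ⟨c0, A0, B0, C0, D0⟩ := M0
  have hj0 : j0.val = 0 := by
    by_contra hc
    obtain ⟨x, hx, -⟩ := B0 0 (by omega)
    omega
  have g0 : m.getD 0 true = true := by rw [← hj0]; simpa using c0.symm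
  have hn1 : 1 ≤ m.length := by omega
  -- position 4
  obtain ⟨j4, M4⟩ := h1 ⟨4, by norm_num⟩
  have hj4lt := j4.isLt
  rw [match_iff] at M4
  simp only [Fin.val_mk] at M4
  obtain ⟨c4, A4, B4, C4, D4⟩ := M4
  have hj4 : j4.val = m.length - 1 := by
    by_contra hc
    obtain ⟨x, hx1, hx2, -⟩ := D4 (j4.val + 1) (by omega) (by omega)
    omega
  have g4 : m.getD (m.length - 1) true = true := by rw [← hj4]; simpa using c4.symm
  -- position 1
  obtain ⟨j1, M1⟩ := h1 ⟨1, by norm_num⟩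
  have hj1lt := j1.isLt
  rw [match_iff] at M1
  simp only [Fin.val_mk] at M1
  obtain ⟨c1, A1, B1, C1, D1⟩ := M1
  have gj1 : m.getD j1.val true = false := by simpa using c1.symm
  have hj1pos : 1 ≤ j1.val := by
    obtain ⟨y, hy, -⟩ := A1 0 (by omega); omega
  have hbefore1 : ∀ y, y < j1.val → m.getD y true = true := by
    intro y hy
    obtain ⟨x, hx, hcol⟩ := B1 y hy
    have hx0 : x = 0 := by omega
    subst hx0
    simpa using hcol.symm
  -- position 3
  obtain ⟨j3, M3⟩ := h1 ⟨3, by norm_num⟩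
  have hj3lt' := j3.isLt
  rw [match_iff] at M3
  simp only [Fin.val_mk] at M3
  obtain ⟨c3, A3, B3, C3, D3⟩ := M3
  have gj3 : m.getD j3.val true = false := by simpa using c3.symm
  have hafter3 : ∀ y, j3.val < y → y < m.length → m.getD y true = true := by
    intro y hy hyn
    obtain ⟨x, hx1, hx2, hcol⟩ := D3 y hy hyn
    have hx4 : x = 4 := by omega
    subst hx4
    simpa using hcol.symm
  have hj3lt : j3.val < m.length - 1 := by
    obtain ⟨y, hy1, hy2, -⟩ := C3 4 (by omega) (by omega)
    omega
  have hj3 : j3.val = m.length - 2 := by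
    by_contra hc
    have ht : j3.val + 1 < m.length := by omega
    have gt : m.getD (j3.val + 1) true = true := hafter3 _ (by omega) ht
    obtain ⟨i, Mi⟩ := h2 ⟨j3.val + 1, ht⟩
    rcases i with ⟨iv, hiv⟩
    rw [match_iff] at Mi
    simp only [Fin.val_mk] at Mi
    obtain ⟨ci, Ai, Bi, Ci, Di⟩ := Mi
    have hiv5 : iv < 5 := by omega
    interval_cases iv
    · obtain ⟨x, hx, -⟩ := Bi 0 (by omega); omega
    · rw [gt] at ci; simp at ci
    · obtain ⟨y, hy1, hy2, hcol⟩ := Ci 3 (by omega) (by omega)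
      rw [hafter3 y (by omega) hy2] at hcol
      simp at hcol
    · rw [gt] at ci; simp at ci
    · obtain ⟨x, hx1, hx2, -⟩ := Di (m.length - 1) (by omega) (by omega)
      omega
  have gn2 : m.getD (m.length - 2) true = false := by rw [← hj3]; exact gj3
  -- j1 = 1
  have hj1 : j1.val = 1 := by
    by_contra hc
    have h1lt : 1 < j1.val := by omega
    have gt : m.getD 1 true = true := hbefore1 1 h1lt
    obtain ⟨i, Mi⟩ := h2 ⟨1, by omega⟩
    rcases i with ⟨iv, hiv⟩
    rw [match_iff] at Mi
    simp only [Fin.val_mk] at Mi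
    obtain ⟨ci, Ai, Bi, Ci, Di⟩ := Mi
    have hiv5 : iv < 5 := by omega
    interval_cases iv
    · obtain ⟨x, hx, -⟩ := Bi 0 (by omega); omega
    · rw [gt] at ci; simp at ci
    · obtain ⟨y, hy, hcol⟩ := Ai 1 (by omega)
      have hy0 : y = 0 := by omega
      subst hy0
      rw [g0] at hcol; simp at hcol
    · rw [gt] at ci; simp at ci
    · obtain ⟨x, hx1, hx2, -⟩ := Di j1.val (by omega) (by omega); omega
  have g1 : m.getD 1 true = false := by rw [← hj1]; exact gj1
  -- middle positions
  have hmid : ∀ t, 1 < t → t < m.length - 2 → m.getD t true = true := by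
    intro t ht1 ht2
    by_contra hc
    rw [Bool.not_eq_true] at hc
    obtain ⟨i, Mi⟩ := h2 ⟨t, by omega⟩
    rcases i with ⟨iv, hiv⟩
    rw [match_iff] at Mi
    simp only [Fin.val_mk] at Mi
    obtain ⟨ci, Ai, Bi, Ci, Di⟩ := Mi
    have hiv5 : iv < 5 := by omega
    interval_cases iv
    · rw [hc] at ci; simp at ci
    · obtain ⟨x, hx, hcol⟩ := Bi 1 (by omega)
      have hx0 : x = 0 := by omega
      subst hx0
      rw [g1] at hcol; simp at hcol
    · rw [hc] at ci; simp at ci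
    · obtain ⟨x, hx1, hx2, hcol⟩ := Di (m.length - 2) (by omega) (by omega)
      have hx4 : x = 4 := by omega
      subst hx4
      rw [gn2] at hcol; simp at hcol
    · rw [hc] at ci; simp at ci
  -- n ≥ 4
  have hn4 : 4 ≤ m.length := by
    obtain ⟨y, hy1, hy2, hcol⟩ := C1 3 (by omega) (by omega)
    have gy : m.getD y true = false := by simpa using hcol.symm
    by_contra hc
    have hy' : y = m.length - 1 := by omega
    rw [hy', g4] at gy; simp at gy
  -- position 2
  obtain ⟨j2, M2⟩ := h1 ⟨2, by norm_num⟩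
  have hj2lt := j2.isLt
  rw [match_iff] at M2
  simp only [Fin.val_mk] at M2
  obtain ⟨c2, A2, B2, C2, D2⟩ := M2
  have hj2ge : 2 ≤ j2.val := by
    obtain ⟨y, hy, hcol⟩ := A2 1 (by omega)
    have gy : m.getD y true = false := by simpa using hcol.symm
    have hy0 : y ≠ 0 := by intro h; rw [h, g0] at gy; simp at gy
    omega
  have hn5 : 5 ≤ m.length := by
    obtain ⟨y, hy1, hy2, hcol⟩ := C2 3 (by omega) (by omega)
    have gy : m.getD y true = false := by simpa using hcol.symm
    by_contra hc
    have hy' : y = m.length - 1 := by omega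
    rw [hy', g4] at gy; simp at gy
  refine ⟨m.length - 4, by omega, ?_⟩
  apply List.ext_getElem
  · rw [shape_len]; omega
  · intro k hk1 hk2
    rw [← List.getD_eq_getElem m true hk1, ← List.getD_eq_getElem (shape _) true hk2]
    rw [shape_getD _ _ (by rw [shape_len] at hk2; omega)]
    by_cases hk : k = 1 ∨ k = m.length - 4 + 2
    · rw [if_pos hk]
      rcases hk with h | h
      · rw [h]; exact g1
      · rw [h, show m.length - 4 + 2 = m.length - 2 by omega]; exact gn2
    · rw [if_neg hk]
      push_neg at hk
      rcases (show k = 0 ∨ (1 < k ∧ k < m.length - 2) ∨ k = m.length - 1 by omega)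
        with h | h | h
      · rw [h]; exact g0
      · exact hmid k h.1 h.2
      · rw [h]; exact g4

lemma bwd1 (p : ℕ) (hp : 1 ≤ p) :
    (∀ i, ∃ j, Match [true,false,true,false,true] (shape p) i j) ∧
    (∀ j, ∃ i, Match [true,false,true,false,true] (shape p) i j) := by
  have hlen := shape_len p
  have hlen5 : ([true,false,true,false,true] : List Bool).length = 5 := rfl
  have M0 : Match [true,false,true,false,true] (shape p) ⟨0, by norm_num⟩ ⟨0, by omega⟩ := by
    apply matchN
    · rw [shape_getD _ _ (by omega), if_neg (by omega)]; rfl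
    · intro x hx; omega
    · intro y hy; omega
    · intro x hx1 hx2
      have hx5 : x < 5 := by omega
      interval_cases x
      · exact ⟨1, by omega, by omega, by rw [shape_getD _ _ (by omega), if_pos (by omega)]; rfl⟩
      · exact ⟨2, by omega, by omega, by rw [shape_getD _ _ (by omega), if_neg (by omega)]; rfl⟩
      · exact ⟨p+2, by omega, by omega, by rw [shape_getD _ _ (by omega), if_pos (by omega)]; rfl⟩
      · exact ⟨p+3, by omega, by omega, by rw [shape_getD _ _ (by omega), if_neg (by omega)]; rfl⟩
    · intro y hy1 hy2
      by_cases hy : y = 1 ∨ y = p+2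
      · exact ⟨1, by omega, by omega, by rw [shape_getD _ _ (by omega), if_pos hy]; rfl⟩
      · exact ⟨2, by omega, by omega, by rw [shape_getD _ _ (by omega), if_neg hy]; rfl⟩
  have M1 : Match [true,false,true,false,true] (shape p) ⟨1, by norm_num⟩ ⟨1, by omega⟩ := by
    apply matchN
    · rw [shape_getD _ _ (by omega), if_pos (by omega)]; rfl
    · intro x hx
      have hx0 : x = 0 := by omega
      subst hx0
      exact ⟨0, by omega, by rw [shape_getD _ _ (by omega), if_neg (by omega)]; rfl⟩
    · intro y hy
      have hy0 : y = 0 := by omega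
      subst hy0
      exact ⟨0, by omega, by rw [shape_getD _ _ (by omega), if_neg (by omega)]; rfl⟩
    · intro x hx1 hx2
      have hx5 : x < 5 := by omega
      interval_cases x
      · exact ⟨2, by omega, by omega, by rw [shape_getD _ _ (by omega), if_neg (by omega)]; rfl⟩
      · exact ⟨p+2, by omega, by omega, by rw [shape_getD _ _ (by omega), if_pos (by omega)]; rfl⟩
      · exact ⟨p+3, by omega, by omega, by rw [shape_getD _ _ (by omega), if_neg (by omega)]; rfl⟩
    · intro y hy1 hy2
      by_cases hy : y = p+2
      · exact ⟨3, by omega, by omega, by rw [shape_getD _ _ (by omega), if_pos (Or.inr hy)]; rfl⟩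
      · exact ⟨2, by omega, by omega, by rw [shape_getD _ _ (by omega), if_neg (by omega)]; rfl⟩
  have M2 : ∀ b, 2 ≤ b → b ≤ p+1 → ∀ hb : b < (shape p).length,
      Match [true,false,true,false,true] (shape p) ⟨2, by norm_num⟩ ⟨b, hb⟩ := by
    intro b h2b hbp hb
    apply matchN
    · rw [shape_getD _ _ (by omega), if_neg (by omega)]; rfl
    · intro x hx
      have hx2 : x = 0 ∨ x = 1 := by omega
      rcases hx2 with h | h <;> subst h
      · exact ⟨0, by omega, by rw [shape_getD _ _ (by omega), if_neg (by omega)]; rfl⟩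
      · exact ⟨1, by omega, by rw [shape_getD _ _ (by omega), if_pos (by omega)]; rfl⟩
    · intro y hy
      by_cases hy1 : y = 1
      · exact ⟨1, by omega, by rw [shape_getD _ _ (by omega), if_pos (Or.inl hy1)]; rfl⟩
      · exact ⟨0, by omega, by rw [shape_getD _ _ (by omega), if_neg (by omega)]; rfl⟩
    · intro x hx1 hx2
      have hx5 : x < 5 := by omega
      interval_cases x
      · exact ⟨p+2, by omega, by omega, by rw [shape_getD _ _ (by omega), if_pos (by omega)]; rfl⟩
      · exact ⟨p+3, by omega, by omega, by rw [shape_getD _ _ (by omega), if_neg (by omega)]; rfl⟩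
    · intro y hy1 hy2
      by_cases hy : y = p+2
      · exact ⟨3, by omega, by omega, by rw [shape_getD _ _ (by omega), if_pos (Or.inr hy)]; rfl⟩
      · exact ⟨4, by omega, by omega, by rw [shape_getD _ _ (by omega), if_neg (by omega)]; rfl⟩
  have M3 : Match [true,false,true,false,true] (shape p) ⟨3, by norm_num⟩ ⟨p+2, by omega⟩ := by
    apply matchN
    · rw [shape_getD _ _ (by omega), if_pos (by omega)]; rfl
    · intro x hx
      have hx3 : x = 0 ∨ x = 1 ∨ x = 2 := by omega
      rcases hx3 with h | h | h <;> subst h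
      · exact ⟨0, by omega, by rw [shape_getD _ _ (by omega), if_neg (by omega)]; rfl⟩
      · exact ⟨1, by omega, by rw [shape_getD _ _ (by omega), if_pos (by omega)]; rfl⟩
      · exact ⟨2, by omega, by rw [shape_getD _ _ (by omega), if_neg (by omega)]; rfl⟩
    · intro y hy
      by_cases hy1 : y = 1
      · exact ⟨1, by omega, by rw [shape_getD _ _ (by omega), if_pos (Or.inl hy1)]; rfl⟩
      · exact ⟨0, by omega, by rw [shape_getD _ _ (by omega), if_neg (by omega)]; rfl⟩
    · intro x hx1 hx2
      have hx4 : x = 4 := by omega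
      subst hx4
      exact ⟨p+3, by omega, by omega, by rw [shape_getD _ _ (by omega), if_neg (by omega)]; rfl⟩
    · intro y hy1 hy2
      have hy3 : y = p+3 := by omega
      subst hy3
      exact ⟨4, by omega, by omega, by rw [shape_getD _ _ (by omega), if_neg (by omega)]; rfl⟩
  have M4 : Match [true,false,true,false,true] (shape p) ⟨4, by norm_num⟩ ⟨p+3, by omega⟩ := by
    apply matchN
    · rw [shape_getD _ _ (by omega), if_neg (by omega)]; rfl
    · intro x hx
      have hx4 : x = 0 ∨ x = 1 ∨ x = 2 ∨ x = 3 := by omega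
      rcases hx4 with h | h | h | h <;> subst h
      · exact ⟨0, by omega, by rw [shape_getD _ _ (by omega), if_neg (by omega)]; rfl⟩
      · exact ⟨1, by omega, by rw [shape_getD _ _ (by omega), if_pos (by omega)]; rfl⟩
      · exact ⟨2, by omega, by rw [shape_getD _ _ (by omega), if_neg (by omega)]; rfl⟩
      · exact ⟨p+2, by omega, by rw [shape_getD _ _ (by omega), if_pos (by omega)]; rfl⟩
    · intro y hy
      by_cases hy1 : y = 1 ∨ y = p+2
      · exact ⟨1, by omega, by rw [shape_getD _ _ (by omega), if_pos hy1]; rfl⟩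
      · exact ⟨0, by omega, by rw [shape_getD _ _ (by omega), if_neg hy1]; rfl⟩
    · intro x hx1 hx2; omega
    · intro y hy1 hy2; omega
  constructor
  · intro i
    rcases i with ⟨iv, hiv⟩
    have hiv5 : iv < 5 := by omega
    interval_cases iv
    · exact ⟨_, M0⟩
    · exact ⟨_, M1⟩
    · exact ⟨⟨2, by omega⟩, M2 2 (by omega) (by omega) (by omega)⟩
    · exact ⟨_, M3⟩
    · exact ⟨_, M4⟩
  · intro j
    rcases j with ⟨jv, hjv⟩
    have hjv' : jv < p + 4 := by omega
    by_cases h0 : jv = 0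
    · subst h0; exact ⟨_, M0⟩
    · by_cases h1 : jv = 1
      · subst h1; exact ⟨_, M1⟩
      · by_cases h2 : jv = p+2
        · subst h2; exact ⟨_, M3⟩
        · by_cases h3 : jv = p+3
          · subst h3; exact ⟨_, M4⟩
          · exact ⟨_, M2 jv (by omega) (by omega) hjv⟩

lemma fwd2 (m : List Bool)
    (h1 : ∀ i, ∃ j, Match [true,false,true,false] m i j)
    (h2 : ∀ j, ∃ i, Match [true,false,true,false] m i j) :
    m = [true,false,true,false] := by
  have hlen4 : ([true,false,true,false] : List Bool).length = 4 := rfl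
  -- position 0
  obtain ⟨j0, M0⟩ := h1 ⟨0, by norm_num⟩
  have hj0lt := j0.isLt
  rw [match_iff] at M0
  simp only [Fin.val_mk] at M0
  obtain ⟨c0, A0, B0, C0, D0⟩ := M0
  have hj0 : j0.val = 0 := by
    by_contra hc
    obtain ⟨x, hx, -⟩ := B0 0 (by omega)
    omega
  have g0 : m.getD 0 true = true := by rw [← hj0]; simpa using c0.symm
  have hn1 : 1 ≤ m.length := by omega
  -- position 3
  obtain ⟨j3, M3⟩ := h1 ⟨3, by norm_num⟩
  have hj3lt := j3.isLt
  rw [match_iff] at M3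
  simp only [Fin.val_mk] at M3
  obtain ⟨c3, A3, B3, C3, D3⟩ := M3
  have hj3 : j3.val = m.length - 1 := by
    by_contra hc
    obtain ⟨x, hx1, hx2, -⟩ := D3 (j3.val + 1) (by omega) (by omega)
    omega
  have gn1 : m.getD (m.length - 1) true = false := by rw [← hj3]; simpa using c3.symm
  -- position 1
  obtain ⟨j1, M1⟩ := h1 ⟨1, by norm_num⟩
  have hj1lt := j1.isLt
  rw [match_iff] at M1
  simp only [Fin.val_mk] at M1
  obtain ⟨c1, A1, B1, C1, D1⟩ := M1
  have gj1 : m.getD j1.val true = false := by simpa using c1.symm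
  have hj1pos : 1 ≤ j1.val := by
    obtain ⟨y, hy, -⟩ := A1 0 (by omega); omega
  have hbefore1 : ∀ y, y < j1.val → m.getD y true = true := by
    intro y hy
    obtain ⟨x, hx, hcol⟩ := B1 y hy
    have hx0 : x = 0 := by omega
    subst hx0
    simpa using hcol.symm
  -- position 2
  obtain ⟨j2, M2⟩ := h1 ⟨2, by norm_num⟩
  have hj2lt := j2.isLt
  rw [match_iff] at M2
  simp only [Fin.val_mk] at M2
  obtain ⟨c2, A2, B2, C2, D2⟩ := M2
  have gj2 : m.getD j2.val true = true := by simpa using c2.symm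
  have hafter2 : ∀ y, j2.val < y → y < m.length → m.getD y true = false := by
    intro y hy hyn
    obtain ⟨x, hx1, hx2, hcol⟩ := D2 y hy hyn
    have hx3 : x = 3 := by omega
    subst hx3
    simpa using hcol.symm
  have hj2ge : 2 ≤ j2.val := by
    obtain ⟨y, hy, hcol⟩ := A2 1 (by omega)
    have gy : m.getD y true = false := by simpa using hcol.symm
    have hy0 : y ≠ 0 := by intro h; rw [h, g0] at gy; simp at gy
    omega
  -- j1 = 1
  have hj1 : j1.val = 1 := by
    by_contra hc
    have h1lt : 1 < j1.val := by omega
    have gt : m.getD 1 true = true := hbefore1 1 h1lt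
    obtain ⟨i, Mi⟩ := h2 ⟨1, by omega⟩
    rcases i with ⟨iv, hiv⟩
    rw [match_iff] at Mi
    simp only [Fin.val_mk] at Mi
    obtain ⟨ci, Ai, Bi, Ci, Di⟩ := Mi
    have hiv4 : iv < 4 := by omega
    interval_cases iv
    · obtain ⟨x, hx, -⟩ := Bi 0 (by omega); omega
    · rw [gt] at ci; simp at ci
    · obtain ⟨y, hy, hcol⟩ := Ai 1 (by omega)
      have hy0 : y = 0 := by omega
      subst hy0
      rw [g0] at hcol; simp at hcol
    · obtain ⟨x, hx1, hx2, -⟩ := Di j1.val (by omega) (by omega); omega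
  have g1 : m.getD 1 true = false := by rw [← hj1]; exact gj1
  -- j2 = 2
  have hj2 : j2.val = 2 := by
    by_contra hc
    have h2lt : 2 < j2.val := by omega
    obtain ⟨i, Mi⟩ := h2 ⟨2, by omega⟩
    rcases i with ⟨iv, hiv⟩
    rw [match_iff] at Mi
    simp only [Fin.val_mk] at Mi
    obtain ⟨ci, Ai, Bi, Ci, Di⟩ := Mi
    have hiv4 : iv < 4 := by omega
    interval_cases iv
    · obtain ⟨x, hx, -⟩ := Bi 0 (by omega); omega
    · obtain ⟨x, hx, hcol⟩ := Bi 1 (by omega)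
      have hx0 : x = 0 := by omega
      subst hx0
      rw [g1] at hcol; simp at hcol
    · obtain ⟨x, hx1, hx2, hcol⟩ := Di j2.val (by omega) (by omega)
      have hx3 : x = 3 := by omega
      subst hx3
      rw [gj2] at hcol; simp at hcol
    · obtain ⟨x, hx1, hx2, -⟩ := Di (m.length - 1) (by omega) (by omega); omega
  have g2 : m.getD 2 true = true := by rw [← hj2]; exact gj2
  -- n ≥ 4
  have hn4 : 4 ≤ m.length := by
    obtain ⟨y, hy1, hy2, -⟩ := C2 3 (by omega) (by omega)
    omega
  -- n = 4
  have hn : m.length = 4 := by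
    by_contra hc
    have g3' : m.getD 3 true = false := hafter2 3 (by omega) (by omega)
    obtain ⟨i, Mi⟩ := h2 ⟨3, by omega⟩
    rcases i with ⟨iv, hiv⟩
    rw [match_iff] at Mi
    simp only [Fin.val_mk] at Mi
    obtain ⟨ci, Ai, Bi, Ci, Di⟩ := Mi
    have hiv4 : iv < 4 := by omega
    interval_cases iv
    · rw [g3'] at ci; simp at ci
    · obtain ⟨x, hx, hcol⟩ := Bi 1 (by omega)
      have hx0 : x = 0 := by omega
      subst hx0
      rw [g1] at hcol; simp at hcol
    · rw [g3'] at ci; simp at ci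
    · obtain ⟨x, hx1, hx2, -⟩ := Di (m.length - 1) (by omega) (by omega); omega
  have g3 : m.getD 3 true = false := by
    rw [show (3:ℕ) = m.length - 1 by omega]; exact gn1
  apply List.ext_getElem
  · rw [hn]; rfl
  · intro k hk1 hk2
    rw [← List.getD_eq_getElem m true hk1,
      ← List.getD_eq_getElem [true,false,true,false] true hk2]
    have hk4 : k < 4 := by omega
    interval_cases k
    · rw [g0]; rfl
    · rw [g1]; rfl
    · rw [g2]; rfl
    · rw [g3]; rfl


/-- with `r = true`, `b = false`, the `≡₂`-class of `rbrbr` is exactly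
`{r b r^p b r : p ≥ 1}`, and `rbrb` lies in a singleton `≡₂`-class. -/
theorem stmt19 :
    ({l : List Bool |
        CLO.EFEquiv 2 (CLO.ofList [true, false, true, false, true]) (CLO.ofList l)} =
      {l : List Bool | ∃ p : ℕ, 1 ≤ p ∧
        l = [true, false] ++ List.replicate p true ++ [false, true]}) ∧
    ({l : List Bool |
        CLO.EFEquiv 2 (CLO.ofList [true, false, true, false]) (CLO.ofList l)} =
      {[true, false, true, false]}) := by
  constructor
  · ext l
    simp only [Set.mem_setOf_eq]
    constructor
    · intro h
      rw [ef2_iff] at h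
      obtain ⟨p, hp, hm⟩ := fwd1 l h.1 h.2
      exact ⟨p, hp, hm⟩
    · rintro ⟨p, hp, rfl⟩
      rw [ef2_iff]
      exact bwd1 p hp
  · ext l
    simp only [Set.mem_setOf_eq, Set.mem_singleton_iff]
    constructor
    · intro h
      rw [ef2_iff] at h
      exact fwd2 l h.1 h.2
    · rintro rfl
      exact ef_refl 2 _
end
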